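/- Let I be a finite index set, d a metric on I, and A ∈ ℝ^{I×I} symmetric positive definite with |A_{ij}| ≤ C exp(−γ d(i,j)) for all i, j ∈ I, for some constants C, γ > 0. Set c_d(γ/2) := sup_{j∈I} Σ_{i∈I} exp(−(γ/2) d(i,j)), κ := ‖A‖·‖A⁻¹‖ (operator norms), r := (1 − κ⁻¹)/(1 + κ⁻¹), and C_R := max{1, 2C/(‖A‖ + ‖A⁻¹‖⁻¹)}. Then for all i, j ∈ I, |(A⁻¹)_{ij}| ≤ [4 / ((‖A‖ + ‖A⁻¹‖⁻¹)(1−r)²)] · exp( −[log(1/r) / (1 + log(c_d(γ/2)) + log(C_R) + log(1/r))] · (γ/2) · d(i,j) ). -/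

import Mathlib

open Matrix

/-- The operator norm of a matrix with respect to the Euclidean norm. -/
noncomputable def euclOpNorm {I : Type*} [Fintype I] [DecidableEq I]
    (A : Matrix I I ℝ) : ℝ :=
  ‖Matrix.toEuclideanCLM (𝕜 := ℝ) A‖

/-- `c_d(t) := sup_{j ∈ I} Σ_{i ∈ I} exp(−t d(i,j))`. -/
noncomputable def cdSum {I : Type*} [Fintype I] (d : I → I → ℝ) (t : ℝ) : ℝ :=
  ⨆ j : I, ∑ i : I, Real.exp (-t * d i j)

section Aux
open scoped Matrix.Norms.L2Operator

variable {I : Type*} [Fintype I] [DecidableEq I] [Nonempty I]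

omit [DecidableEq I] [Nonempty I] in
lemma euclAbs_le_norm' (y : EuclideanSpace ℝ I) (i : I) : |y i| ≤ ‖y‖ := by
  rw [EuclideanSpace.norm_eq, ← Real.sqrt_sq_eq_abs]
  apply Real.sqrt_le_sqrt
  have := Finset.single_le_sum (f := fun k => ‖y k‖^2) (fun k _ => by positivity)
    (Finset.mem_univ i)
  simpa [Real.norm_eq_abs, sq_abs] using this

omit [Nonempty I] in
lemma entry_le_norm' (X : Matrix I I ℝ) (i j : I) : |X i j| ≤ ‖X‖ := by
  have h := X.l2_opNorm_mulVec (EuclideanSpace.single j (1:ℝ))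
  rw [EuclideanSpace.norm_single, norm_one, mul_one] at h
  refine le_trans ?_ h
  have h2 := euclAbs_le_norm'
    ((EuclideanSpace.equiv I ℝ).symm (X *ᵥ (EuclideanSpace.single j (1:ℝ)))) i
  refine le_trans (le_of_eq ?_) h2
  congr 1
  show X i j = X.mulVec (Pi.single j 1) i
  simp [Matrix.mulVec_single]

omit [Nonempty I] in
lemma norm_diagonal_le' (v : I → ℝ) (m : ℝ) (hm : 0 ≤ m) (h : ∀ i, |v i| ≤ m) :
    ‖(diagonal v : Matrix I I ℝ)‖ ≤ m := by
  rw [Matrix.cstar_norm_def]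
  apply ContinuousLinearMap.opNorm_le_bound _ hm
  intro x
  have hx : toEuclideanCLM (𝕜 := ℝ) (diagonal v) x
      = (EuclideanSpace.equiv I ℝ).symm (diagonal v *ᵥ (x : I → ℝ)) := rfl
  rw [hx, EuclideanSpace.norm_eq, EuclideanSpace.norm_eq,
    ← Real.sqrt_sq hm, ← Real.sqrt_mul (by positivity), Finset.mul_sum]
  apply Real.sqrt_le_sqrt
  apply Finset.sum_le_sum
  intro k _
  show ‖(diagonal v *ᵥ (x : I → ℝ)) k‖^2 ≤ m^2 * ‖(x : I → ℝ) k‖^2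
  rw [mulVec_diagonal, Real.norm_eq_abs, Real.norm_eq_abs, abs_mul, mul_pow]
  have h2 : |v k|^2 ≤ m^2 := by
    have := h k
    nlinarith [abs_nonneg (v k)]
  exact mul_le_mul_of_nonneg_right h2 (by positivity)

omit [Nonempty I] in
lemma eig_abs_le_norm' (X : Matrix I I ℝ) (u : I → ℝ) (t : ℝ)
    (hv : X *ᵥ u = t • u) (hu : ‖(EuclideanSpace.equiv I ℝ).symm u‖ = 1) :
    |t| ≤ ‖X‖ := by
  have h := X.l2_opNorm_mulVec ((EuclideanSpace.equiv I ℝ).symm u)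
  rw [show (X *ᵥ ((EuclideanSpace.equiv I ℝ).symm u : EuclideanSpace ℝ I) : I → ℝ)
      = X *ᵥ u from rfl, hv, _root_.map_smul, norm_smul, hu] at h
  simpa using h

lemma norm_one_matrix' : ‖(1 : Matrix I I ℝ)‖ = 1 := by
  haveI : Nontrivial (EuclideanSpace ℝ I) := by infer_instance
  rw [Matrix.cstar_norm_def, _root_.map_one]
  exact ContinuousLinearMap.norm_id

lemma unitary_conj_norm_le (A : Matrix I I ℝ) (hA : A.IsHermitian) (v : I → ℝ) :
    ‖(hA.eigenvectorUnitary : Matrix I I ℝ) * diagonal v *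
      star (hA.eigenvectorUnitary : Matrix I I ℝ)‖ ≤ ‖(diagonal v : Matrix I I ℝ)‖ := by
  have hU : ‖(hA.eigenvectorUnitary : Matrix I I ℝ)‖ = 1 := by
    have h2 := Matrix.l2_opNorm_conjTranspose_mul_self (hA.eigenvectorUnitary : Matrix I I ℝ)
    have h3 : (hA.eigenvectorUnitary : Matrix I I ℝ)ᴴ *
        (hA.eigenvectorUnitary : Matrix I I ℝ) = 1 := by
      rw [← Matrix.star_eq_conjTranspose]
      exact Unitary.star_mul_self_of_mem (hA.eigenvectorUnitary).2
    rw [h3, norm_one_matrix'] at h2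
    nlinarith [norm_nonneg (hA.eigenvectorUnitary : Matrix I I ℝ)]
  have hUs : ‖star (hA.eigenvectorUnitary : Matrix I I ℝ)‖ = 1 := by
    rw [Matrix.star_eq_conjTranspose, Matrix.l2_opNorm_conjTranspose]
    exact hU
  calc ‖(hA.eigenvectorUnitary : Matrix I I ℝ) * diagonal v *
        star (hA.eigenvectorUnitary : Matrix I I ℝ)‖
      ≤ ‖(hA.eigenvectorUnitary : Matrix I I ℝ) * diagonal v‖ *
        ‖star (hA.eigenvectorUnitary : Matrix I I ℝ)‖ := Matrix.l2_opNorm_mul _ _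
    _ ≤ ‖(hA.eigenvectorUnitary : Matrix I I ℝ)‖ * ‖(diagonal v : Matrix I I ℝ)‖ *
        ‖star (hA.eigenvectorUnitary : Matrix I I ℝ)‖ := by
        exact mul_le_mul_of_nonneg_right (Matrix.l2_opNorm_mul _ _) (norm_nonneg _)
    _ = ‖(diagonal v : Matrix I I ℝ)‖ := by rw [hU, hUs, one_mul, mul_one]

lemma hermitian_conj_decomp (A : Matrix I I ℝ) (hA : A.IsHermitian) (t : ℝ) :
    1 - t • A = (hA.eigenvectorUnitary : Matrix I I ℝ) *
      diagonal (fun k => 1 - t * hA.eigenvalues k) *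
      star (hA.eigenvectorUnitary : Matrix I I ℝ) := by
  have hUU : (hA.eigenvectorUnitary : Matrix I I ℝ) *
      star (hA.eigenvectorUnitary : Matrix I I ℝ) = 1 :=
    Unitary.mul_star_self_of_mem (hA.eigenvectorUnitary).2
  have hspec : A = (hA.eigenvectorUnitary : Matrix I I ℝ) * diagonal hA.eigenvalues *
      star (hA.eigenvectorUnitary : Matrix I I ℝ) := by
    have := hA.spectral_theorem
    simpa using this
  have hdiag : diagonal (fun k => 1 - t * hA.eigenvalues k)
      = 1 - t • diagonal hA.eigenvalues := by
    rw [← diagonal_one, ← diagonal_smul, ← diagonal_sub]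
    rfl
  rw [hdiag, Matrix.mul_sub, Matrix.sub_mul, mul_one, hUU,
    mul_smul_comm, smul_mul_assoc, ← hspec]

end Aux

set_option maxHeartbeats 2000000 in
open scoped Matrix.Norms.L2Operator in
/-- The inverse of a well-conditioned symmetric positive definite
matrix with exponentially decaying entries decays exponentially. -/
theorem inverse_of_exponentially_decaying_matrix
    {I : Type*} [Fintype I] [DecidableEq I] [Nonempty I]
    (d : I → I → ℝ)
    (hd_self : ∀ i, d i i = 0)
    (hd_symm : ∀ i j, d i j = d j i)
    (hd_tri : ∀ i j k, d i k ≤ d i j + d j k)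
    (hd_sep : ∀ i j, d i j = 0 → i = j)
    (A : Matrix I I ℝ) (hA : A.PosDef)
    (C γ : ℝ) (hC : 0 < C) (hγ : 0 < γ)
    (hdecay : ∀ i j, |A i j| ≤ C * Real.exp (-γ * d i j))
    (κ r CR : ℝ)
    (hκ : κ = euclOpNorm A * euclOpNorm A⁻¹)
    (hr : r = (1 - κ⁻¹) / (1 + κ⁻¹))
    (hCR : CR = max 1 (2 * C / (euclOpNorm A + (euclOpNorm A⁻¹)⁻¹))) :
    ∀ i j, |A⁻¹ i j| ≤
      4 / ((euclOpNorm A + (euclOpNorm A⁻¹)⁻¹) * (1 - r) ^ 2) *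
        Real.exp (-(Real.log (1 / r) /
            (1 + Real.log (cdSum d (γ / 2)) + Real.log CR + Real.log (1 / r))) *
          (γ / 2) * d i j) := by
  classical
  have hnorm_eq : ∀ X : Matrix I I ℝ, euclOpNorm X = ‖X‖ := fun X => rfl
  set a : ℝ := euclOpNorm A with ha_def
  set β : ℝ := euclOpNorm A⁻¹ with hβ_def
  set b : ℝ := β⁻¹ with hb_def
  have hdet : IsUnit A.det := hA.det_pos.ne'.isUnit
  have hμpos : ∀ i, 0 < hA.1.eigenvalues i := hA.eigenvalues_pos
  have hunit : ∀ i, ‖(EuclideanSpace.equiv I ℝ).symm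
      ((WithLp.equiv 2 _) (hA.1.eigenvectorBasis i))‖ = 1 := by
    intro i
    have := hA.1.eigenvectorBasis.orthonormal.1 i
    simpa using this
  have hμub : ∀ i, hA.1.eigenvalues i ≤ a := by
    intro i
    have h := eig_abs_le_norm' A _ _ (hA.1.mulVec_eigenvectorBasis i) (hunit i)
    rw [ha_def, hnorm_eq]
    exact (abs_le.1 h).2
  have hinv_eig : ∀ i, A⁻¹ *ᵥ (WithLp.equiv 2 _) (hA.1.eigenvectorBasis i)
      = (hA.1.eigenvalues i)⁻¹ • (WithLp.equiv 2 _) (hA.1.eigenvectorBasis i) := by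
    intro i
    have hv := hA.1.mulVec_eigenvectorBasis i
    have h1 : A⁻¹ *ᵥ (A *ᵥ (WithLp.equiv 2 _) (hA.1.eigenvectorBasis i))
        = (WithLp.equiv 2 _) (hA.1.eigenvectorBasis i) := by
      rw [mulVec_mulVec, Matrix.nonsing_inv_mul A hdet, one_mulVec]
    rw [WithLp.equiv_apply, hv, mulVec_smul] at h1
    rw [eq_comm, inv_smul_eq_iff₀ (hμpos i).ne']
    exact h1.symm
  have hμinvle : ∀ i, (hA.1.eigenvalues i)⁻¹ ≤ β := by
    intro i
    have h := eig_abs_le_norm' A⁻¹ _ _ (hinv_eig i) (hunit i)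
    rw [hβ_def, hnorm_eq]
    exact (abs_le.1 h).2
  obtain ⟨i₀⟩ := ‹Nonempty I›
  have hβpos : 0 < β := lt_of_lt_of_le (inv_pos.2 (hμpos i₀)) (hμinvle i₀)
  have hbpos : 0 < b := inv_pos.2 hβpos
  have hμlb : ∀ i, b ≤ hA.1.eigenvalues i := by
    intro i
    rw [hb_def, ← inv_inv (hA.1.eigenvalues i)]
    exact inv_anti₀ (inv_pos.2 (hμpos i)) (hμinvle i)
  have hapos : 0 < a := lt_of_lt_of_le (hμpos i₀) (hμub i₀)
  have hba : b ≤ a := le_trans (hμlb i₀) (hμub i₀)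
  have habpos : 0 < a + b := by linarith
  have hκval : κ⁻¹ = b / a := by
    rw [hκ, mul_inv, ← hb_def, inv_mul_eq_div]
  have hrval : r = (a - b) / (a + b) := by
    have h1 : (1:ℝ) + b / a ≠ 0 := by positivity
    rw [hr, hκval, div_eq_div_iff h1 habpos.ne']
    field_simp
  have hr0 : 0 ≤ r := hrval ▸ div_nonneg (by linarith) habpos.le
  have hr1 : r < 1 := by rw [hrval, div_lt_one habpos]; linarith
  have h1r : 1 - r = 2 * b / (a + b) := by
    rw [hrval]
    field_simp
    ring
  set Mc : ℝ := (a + b) / 2 with hMc_def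
  have hMpos : 0 < Mc := by positivity
  have hMinv : Mc⁻¹ = 2 / (a + b) := by rw [hMc_def, inv_div]
  set B : Matrix I I ℝ := 1 - Mc⁻¹ • A with hB_def
  -- entrywise bound on B
  have hab0 : a + b ≠ 0 := habpos.ne'
  have hBnorm : ‖B‖ ≤ r := by
    rw [hB_def, hermitian_conj_decomp A hA.1 Mc⁻¹]
    refine le_trans (unitary_conj_norm_le A hA.1 _) (norm_diagonal_le' _ r hr0 ?_)
    intro k
    rw [abs_le, hMinv, hrval]
    constructor
    · rw [← sub_nonneg]
      have e : (1 - 2 / (a + b) * hA.1.eigenvalues k) - (-((a - b) / (a + b)))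
          = 2 * (a - hA.1.eigenvalues k) / (a + b) := by
        field_simp
        ring
      rw [e]
      exact div_nonneg (by linarith [hμub k]) habpos.le
    · rw [← sub_nonneg]
      have e : (a - b) / (a + b) - (1 - 2 / (a + b) * hA.1.eigenvalues k)
          = 2 * (hA.1.eigenvalues k - b) / (a + b) := by
        field_simp
        ring
      rw [e]
      exact div_nonneg (by linarith [hμlb k]) habpos.le
  have hCR1 : (1:ℝ) ≤ CR := by rw [hCR]; exact le_max_left _ _
  have hCRpos : (0:ℝ) < CR := by linarith
  have hd0 : ∀ i j, 0 ≤ d i j := by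
    intro i j
    have h := hd_tri i j i
    rw [hd_self i, hd_symm j i] at h
    linarith
  have hBentry : ∀ i j, |B i j| ≤ CR * Real.exp (-γ * d i j) := by
    intro i j
    by_cases hij : i = j
    · subst hij
      rw [hd_self, mul_zero, Real.exp_zero, mul_one]
      calc |B i i| ≤ ‖B‖ := entry_le_norm' B i i
        _ ≤ r := hBnorm
        _ ≤ 1 := hr1.le
        _ ≤ CR := hCR1
    · have hBij : B i j = -(Mc⁻¹ * A i j) := by
        rw [hB_def, Matrix.sub_apply, Matrix.smul_apply, Matrix.one_apply_ne hij,
          smul_eq_mul]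
        ring
      rw [hBij, abs_neg, abs_mul, abs_of_pos (inv_pos.2 hMpos)]
      calc Mc⁻¹ * |A i j| ≤ Mc⁻¹ * (C * Real.exp (-γ * d i j)) :=
            mul_le_mul_of_nonneg_left (hdecay i j) (inv_pos.2 hMpos).le
        _ = (2 * C / (a + b)) * Real.exp (-γ * d i j) := by rw [hMinv]; ring
        _ ≤ CR * Real.exp (-γ * d i j) := by
            apply mul_le_mul_of_nonneg_right _ (Real.exp_pos _).le
            rw [hCR]
            exact le_max_right _ _
  -- cdSum facts
  set c : ℝ := cdSum d (γ / 2) with hc_def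
  have hcol : ∀ j, (∑ l, Real.exp (-(γ/2) * d l j)) ≤ c := by
    intro j
    rw [hc_def]
    exact le_ciSup (f := fun j' : I => ∑ l, Real.exp (-(γ/2) * d l j'))
      (Set.Finite.bddAbove (Set.finite_range _)) j
  have hc1 : (1:ℝ) ≤ c := by
    refine le_trans ?_ (hcol i₀)
    have h1 : Real.exp (-(γ/2) * d i₀ i₀) = 1 := by
      rw [hd_self, mul_zero, Real.exp_zero]
    rw [← h1]
    exact Finset.single_le_sum (f := fun l => Real.exp (-(γ/2) * d l i₀))
      (fun l _ => (Real.exp_pos _).le) (Finset.mem_univ i₀)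
  have hcpos : (0:ℝ) < c := by linarith
  -- decay of powers of B
  have hpow : ∀ (k : ℕ) (i j : I), |(B ^ (k+1)) i j|
      ≤ CR ^ (k+1) * c ^ k * Real.exp (-(γ/2) * d i j) := by
    intro k
    induction k with
    | zero =>
      intro i j
      simp only [zero_add, pow_one, pow_zero, mul_one]
      calc |B i j| ≤ CR * Real.exp (-γ * d i j) := hBentry i j
        _ ≤ CR * Real.exp (-(γ/2) * d i j) := by
            apply mul_le_mul_of_nonneg_left _ hCRpos.le
            apply Real.exp_le_exp.2
            nlinarith [hd0 i j]
    | succ k ih =>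
      intro i j
      show |(B ^ (k+2)) i j| ≤ CR ^ (k+2) * c ^ (k+1) * Real.exp (-(γ/2) * d i j)
      have hstep : (B ^ (k+2)) i j = ∑ l, (B ^ (k+1)) i l * B l j := by
        rw [pow_succ, Matrix.mul_apply]
      rw [hstep]
      calc |∑ l, (B ^ (k+1)) i l * B l j| ≤ ∑ l, |(B ^ (k+1)) i l| * |B l j| := by
            refine le_trans (Finset.abs_sum_le_sum_abs _ _) (le_of_eq ?_)
            simp [abs_mul]
        _ ≤ ∑ l, (CR ^ (k+1) * c ^ k * Real.exp (-(γ/2) * d i l))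
              * (CR * Real.exp (-γ * d l j)) := by
            refine Finset.sum_le_sum fun l _ => ?_
            exact mul_le_mul (ih i l) (hBentry l j) (abs_nonneg _) (by positivity)
        _ ≤ ∑ l, (CR ^ (k+2) * c ^ k * Real.exp (-(γ/2) * d i j))
              * Real.exp (-(γ/2) * d l j) := by
            refine Finset.sum_le_sum fun l _ => ?_
            have hexp : Real.exp (-(γ/2) * d i l) * Real.exp (-γ * d l j)
                ≤ Real.exp (-(γ/2) * d i j) * Real.exp (-(γ/2) * d l j) := by
              rw [← Real.exp_add, ← Real.exp_add]
              apply Real.exp_le_exp.2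
              nlinarith [hd_tri i l j, hd0 l j]
            calc (CR ^ (k+1) * c ^ k * Real.exp (-(γ/2) * d i l))
                  * (CR * Real.exp (-γ * d l j))
                = (CR ^ (k+2) * c ^ k) *
                  (Real.exp (-(γ/2) * d i l) * Real.exp (-γ * d l j)) := by ring
              _ ≤ (CR ^ (k+2) * c ^ k) *
                  (Real.exp (-(γ/2) * d i j) * Real.exp (-(γ/2) * d l j)) :=
                  mul_le_mul_of_nonneg_left hexp (by positivity)
              _ = (CR ^ (k+2) * c ^ k * Real.exp (-(γ/2) * d i j))
                  * Real.exp (-(γ/2) * d l j) := by ring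
        _ = (CR ^ (k+2) * c ^ k * Real.exp (-(γ/2) * d i j))
              * ∑ l, Real.exp (-(γ/2) * d l j) := by rw [← Finset.mul_sum]
        _ ≤ (CR ^ (k+2) * c ^ k * Real.exp (-(γ/2) * d i j)) * c :=
            mul_le_mul_of_nonneg_left (hcol j) (by positivity)
        _ = CR ^ (k+2) * c ^ (k+1) * Real.exp (-(γ/2) * d i j) := by ring
  -- Neumann series identity
  have hAinvA : A⁻¹ * A = 1 := Matrix.nonsing_inv_mul A hdet
  have hkey : ∀ N : ℕ, A⁻¹ = Mc⁻¹ • (∑ k ∈ Finset.range N, B ^ k) + A⁻¹ * B ^ N := by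
    intro N
    have h1 : (1 - B) * ∑ k ∈ Finset.range N, B ^ k = 1 - B ^ N := mul_neg_geom_sum B N
    have h2 : (1 : Matrix I I ℝ) - B = Mc⁻¹ • A := by
      rw [hB_def]
      exact sub_sub_cancel 1 (Mc⁻¹ • A)
    have h3 := congrArg (fun X => A⁻¹ * X) h1
    rw [Matrix.mul_sub, mul_one, ← mul_assoc, h2, mul_smul_comm, hAinvA,
      smul_mul_assoc, one_mul] at h3
    rw [h3]
    abel
  -- setup for the final bound
  set L : ℝ := Real.log (1/r) with hL_def
  set Dq : ℝ := 1 + Real.log c + Real.log CR + L with hDq_def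
  have hL0 : 0 ≤ L := by
    rcases eq_or_lt_of_le hr0 with h | h
    · simp [hL_def, ← h]
    · apply Real.log_nonneg
      rw [le_div_iff₀ h]
      linarith
  have hlogc0 : 0 ≤ Real.log c := Real.log_nonneg hc1
  have hlogCR0 : 0 ≤ Real.log CR := Real.log_nonneg hCR1
  have hDq1 : 1 ≤ Dq := by rw [hDq_def]; linarith
  have hDqpos : 0 < Dq := by linarith
  have hKpos : 0 < (a + b) * (1 - r)^2 := by
    apply mul_pos habpos
    have h1rpos : (0:ℝ) < 1 - r := by linarith
    positivity
  have hconst : Mc⁻¹ + b⁻¹ ≤ 4 / ((a + b) * (1 - r)^2) := by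
    rw [le_div_iff₀ hKpos, hMinv, h1r]
    have e : (2 / (a + b) + b⁻¹) * ((a + b) * (2 * b / (a + b))^2)
        = 8 * (b / (a+b))^2 + 4 * (b / (a+b)) := by
      field_simp
      ring
    rw [e]
    have hu1 : b / (a + b) ≤ 1/2 := by
      rw [div_le_iff₀ habpos]
      linarith
    have hu0 : 0 ≤ b / (a + b) := div_nonneg hbpos.le habpos.le
    nlinarith
  -- main estimate
  intro i j
  by_cases hij : i = j
  · subst hij
    rw [hd_self, mul_zero, Real.exp_zero, mul_one]
    calc |A⁻¹ i i| ≤ ‖A⁻¹‖ := entry_le_norm' A⁻¹ i i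
      _ = b⁻¹ := by rw [← hnorm_eq, ← hβ_def, hb_def, inv_inv]
      _ ≤ Mc⁻¹ + b⁻¹ := by
          have : 0 < Mc⁻¹ := inv_pos.2 hMpos
          linarith
      _ ≤ 4 / ((a + b) * (1 - r)^2) := hconst
  · have hdij : 0 < d i j := by
      rcases eq_or_lt_of_le (hd0 i j) with h | h
      · exact absurd (hd_sep i j h.symm) hij
      · exact h
    set δ : ℝ := γ/2 * d i j with hδ_def
    have hδpos : 0 < δ := by rw [hδ_def]; positivity
    set N : ℕ := ⌈δ / Dq⌉₊ with hN_def
    have hNpos : 0 < N := Nat.ceil_pos.2 (div_pos hδpos hDqpos)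
    have hNlb : δ / Dq ≤ (N:ℝ) := Nat.le_ceil _
    have hNub : (N:ℝ) ≤ δ / Dq + 1 :=
      (Nat.ceil_lt_add_one (div_pos hδpos hDqpos).le).le
    obtain ⟨N', hN'⟩ : ∃ m, N = m + 1 := ⟨N - 1, (Nat.succ_pred_eq_of_pos hNpos).symm⟩
    have hN'le : (N':ℝ) ≤ δ / Dq := by
      rw [hN'] at hNub
      push_cast at hNub
      linarith
    have hexpδ : Real.exp (-(γ/2) * d i j) = Real.exp (-δ) :=
      congrArg Real.exp (by rw [hδ_def]; ring)
    have hcCRpos : (0:ℝ) < c * CR := mul_pos hcpos hCRpos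
    have hcCR1 : (1:ℝ) ≤ c * CR := by nlinarith
    -- per-term bound for the partial sum
    have hterm : ∀ k ∈ Finset.range N, |(B ^ k) i j|
        ≤ (c * CR) ^ N' * Real.exp (-(γ/2) * d i j) := by
      intro k hk
      rw [Finset.mem_range] at hk
      match k with
      | 0 =>
        rw [pow_zero, Matrix.one_apply_ne hij, abs_zero]
        positivity
      | (k' + 1) =>
        have hk'le : k' + 1 ≤ N' := by omega
        calc |(B ^ (k'+1)) i j| ≤ CR ^ (k'+1) * c ^ k' * Real.exp (-(γ/2) * d i j) :=
              hpow k' i j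
          _ ≤ (c * CR) ^ (k'+1) * Real.exp (-(γ/2) * d i j) := by
              apply mul_le_mul_of_nonneg_right _ (Real.exp_pos _).le
              rw [mul_pow]
              rw [mul_comm (c ^ (k'+1)) (CR ^ (k'+1))]
              apply mul_le_mul_of_nonneg_left _ (by positivity)
              exact pow_le_pow_right₀ hc1 (Nat.le_succ k')
          _ ≤ (c * CR) ^ N' * Real.exp (-(γ/2) * d i j) := by
              apply mul_le_mul_of_nonneg_right _ (Real.exp_pos _).le
              exact pow_le_pow_right₀ hcCR1 hk'le
    have hsum : ∑ k ∈ Finset.range N, |(B ^ k) i j|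
        ≤ (N:ℝ) * ((c * CR) ^ N' * Real.exp (-(γ/2) * d i j)) := by
      calc ∑ k ∈ Finset.range N, |(B ^ k) i j|
          ≤ ∑ _k ∈ Finset.range N, (c * CR) ^ N' * Real.exp (-(γ/2) * d i j) :=
            Finset.sum_le_sum hterm
        _ = (N:ℝ) * ((c * CR) ^ N' * Real.exp (-(γ/2) * d i j)) := by
            rw [Finset.sum_const, Finset.card_range, nsmul_eq_mul]
    -- growth estimate
    have hlogsum : Real.log (c * CR) = Dq - 1 - L := by
      rw [Real.log_mul hcpos.ne' hCRpos.ne', hDq_def]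
      ring
    have hpow_exp : (c * CR) ^ N' = Real.exp ((N':ℝ) * Real.log (c * CR)) := by
      rw [Real.exp_nat_mul, Real.exp_log hcCRpos]
    have hgrow : (N:ℝ) * (c * CR) ^ N' ≤ Real.exp (δ - L * δ / Dq) := by
      calc (N:ℝ) * (c * CR) ^ N' = ((N':ℝ) + 1) * (c * CR) ^ N' := by
            rw [hN']; push_cast; ring
        _ ≤ Real.exp (N':ℝ) * (c * CR) ^ N' :=
            mul_le_mul_of_nonneg_right (Real.add_one_le_exp _) (by positivity)
        _ = Real.exp ((N':ℝ) * (1 + Real.log (c * CR))) := by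
            rw [hpow_exp, ← Real.exp_add]
            congr 1
            ring
        _ ≤ Real.exp (δ / Dq * (1 + Real.log (c * CR))) := by
            apply Real.exp_le_exp.2
            apply mul_le_mul_of_nonneg_right hN'le
            have := Real.log_nonneg hcCR1
            linarith
        _ = Real.exp (δ - L * δ / Dq) := by
            congr 1
            rw [hlogsum]
            field_simp
            ring
    have hS : (N:ℝ) * ((c * CR) ^ N' * Real.exp (-(γ/2) * d i j))
        ≤ Real.exp (-(L * δ / Dq)) := by
      rw [hexpδ]
      calc (N:ℝ) * ((c * CR) ^ N' * Real.exp (-δ))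
          = ((N:ℝ) * (c * CR) ^ N') * Real.exp (-δ) := by ring
        _ ≤ Real.exp (δ - L * δ / Dq) * Real.exp (-δ) :=
            mul_le_mul_of_nonneg_right hgrow (Real.exp_pos _).le
        _ = Real.exp (-(L * δ / Dq)) := by
            rw [← Real.exp_add]
            congr 1
            ring
    -- tail estimate
    have htailpow : r ^ N ≤ Real.exp (-(L * δ / Dq)) := by
      rcases eq_or_lt_of_le hr0 with h | h
      · rw [← h, zero_pow hNpos.ne']
        exact (Real.exp_pos _).le
      · have hrexp : r ^ N = Real.exp ((N:ℝ) * Real.log r) := by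
          rw [Real.exp_nat_mul, Real.exp_log h]
        rw [hrexp]
        apply Real.exp_le_exp.2
        have hLr : Real.log r = -L := by
          rw [hL_def, one_div, Real.log_inv]
          ring
        rw [hLr]
        have h1 : L * (δ / Dq) ≤ L * (N:ℝ) := mul_le_mul_of_nonneg_left hNlb hL0
        calc (N:ℝ) * -L = -(L * (N:ℝ)) := by ring
          _ ≤ -(L * (δ / Dq)) := neg_le_neg h1
          _ = -(L * δ / Dq) := by ring
    -- put the pieces together
    have hentry : A⁻¹ i j = Mc⁻¹ * (∑ k ∈ Finset.range N, (B ^ k) i j)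
        + (A⁻¹ * B ^ N) i j := by
      conv_lhs => rw [hkey N]
      rw [Matrix.add_apply, Matrix.smul_apply, smul_eq_mul, Matrix.sum_apply]
    have htail : |(A⁻¹ * B ^ N) i j| ≤ b⁻¹ * Real.exp (-(L * δ / Dq)) := by
      calc |(A⁻¹ * B ^ N) i j| ≤ ‖A⁻¹ * B ^ N‖ := entry_le_norm' _ i j
        _ ≤ ‖A⁻¹‖ * ‖B ^ N‖ := Matrix.l2_opNorm_mul _ _
        _ ≤ ‖A⁻¹‖ * ‖B‖ ^ N := by
            apply mul_le_mul_of_nonneg_left (norm_pow_le' B hNpos) (norm_nonneg _)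
        _ ≤ b⁻¹ * r ^ N := by
            have hβb : ‖A⁻¹‖ = b⁻¹ := by rw [← hnorm_eq, ← hβ_def, hb_def, inv_inv]
            rw [hβb]
            apply mul_le_mul_of_nonneg_left _ (by positivity)
            exact pow_le_pow_left₀ (norm_nonneg _) hBnorm N
        _ ≤ b⁻¹ * Real.exp (-(L * δ / Dq)) :=
            mul_le_mul_of_nonneg_left htailpow (by positivity)
    have hMcinvpos : 0 < Mc⁻¹ := inv_pos.2 hMpos
    calc |A⁻¹ i j| = |Mc⁻¹ * (∑ k ∈ Finset.range N, (B ^ k) i j)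
          + (A⁻¹ * B ^ N) i j| := by rw [← hentry]
      _ ≤ |Mc⁻¹ * (∑ k ∈ Finset.range N, (B ^ k) i j)| + |(A⁻¹ * B ^ N) i j| :=
          abs_add_le _ _
      _ ≤ Mc⁻¹ * (∑ k ∈ Finset.range N, |(B ^ k) i j|) + b⁻¹ * Real.exp (-(L * δ / Dq)) := by
          apply add_le_add _ htail
          rw [abs_mul, abs_of_pos hMcinvpos]
          exact mul_le_mul_of_nonneg_left (Finset.abs_sum_le_sum_abs _ _) hMcinvpos.le
      _ ≤ Mc⁻¹ * Real.exp (-(L * δ / Dq)) + b⁻¹ * Real.exp (-(L * δ / Dq)) := by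
          apply add_le_add _ le_rfl
          exact mul_le_mul_of_nonneg_left (le_trans hsum hS) hMcinvpos.le
      _ = (Mc⁻¹ + b⁻¹) * Real.exp (-(L * δ / Dq)) := by ring
      _ ≤ 4 / ((a + b) * (1 - r)^2) * Real.exp (-(L * δ / Dq)) :=
          mul_le_mul_of_nonneg_right hconst (Real.exp_pos _).le
      _ = 4 / ((a + b) * (1 - r)^2) * Real.exp (-(L / Dq) * (γ / 2) * d i j) := by
          congr 1
          apply congrArg Real.exp
          rw [hδ_def]
          ring
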